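/- arXiv:2105.00288 — 2 statements merged into one kernel-verified Lean document; each statement's English description precedes it below -/
import Mathlib

section
/- With U_β and L_β as in the previous definitions and γ ∈ (0,1), the interval I_α(X,R) = [L_{αγ}(X,R), U_{α(1−γ)}(X,R)] satisfies P(FDP(θ, R) ∈ I_α(X,R) | X) ≥ 1 − α almost surely, and hence P(FDP(θ, S(X)) ∈ I_α(X, S(X))) ≥ 1 − α for any measurable selection policy S(·) with S(X) nonempty. -/
open MeasureTheory ProbabilityTheory

/-- False discovery proportion of configuration `θ` on selected set `R`. -/
noncomputable def FDP {m : ℕ} (θ : Fin m → Bool) (R : Finset (Fin m)) : ℝ :=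
  ((R.filter (fun i => θ i = false)).card : ℝ) / max (R.card : ℝ) 1

instance {m : ℕ} : MeasurableSpace (Finset (Fin m)) := ⊤


lemma measurable_from_countable' {A B : Type*} [MeasurableSpace A] [MeasurableSpace B]
    [Countable A] [MeasurableSingletonClass A] (g : A → B) : Measurable g :=
  fun _ _ => (Set.to_countable _).measurableSet

lemma measurableSet_of_countable {A : Type*} [MeasurableSpace A] [Countable A]
    [MeasurableSingletonClass A] (s : Set A) : MeasurableSet s :=
  (Set.to_countable _).measurableSet

lemma measurable_decide_le (c : ℝ) : Measurable fun x : ℝ => decide (c ≤ x) := by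
  have : (fun x : ℝ => decide (c ≤ x)) = fun x => if c ≤ x then true else false := by
    funext x; by_cases h : c ≤ x <;> simp [h]
  rw [this]
  exact Measurable.ite measurableSet_Ici measurable_const measurable_const

lemma cond_key {Ω : Type*} {m' : MeasurableSpace Ω} [m0 : MeasurableSpace Ω]
    (hm : m' ≤ m0) (μ : Measure Ω) [IsProbabilityMeasure μ]
    (D : ℕ → Set Ω) (hD : ∀ n, MeasurableSet (D n))
    (g : Ω → ℕ) (hg : Measurable[m'] g) (M : ℕ) (c : ℝ)
    (cpf : ℕ → Ω → ℝ)
    (hcpf : ∀ n, cpf n = μ[(D n).indicator (fun _ => (1:ℝ))|m'])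
    (hae : ∀ ω, g ω ≤ M ∧ c ≤ cpf (g ω) ω) :
    ∀ᵐ ω ∂μ, c ≤ (μ[Set.indicator {ω' | ω' ∈ D (g ω')} (fun _ => (1:ℝ))|m']) ω := by
  classical
  set E : Set Ω := {ω' | ω' ∈ D (g ω')} with hE
  have hgk : ∀ k, MeasurableSet[m'] {ω | g ω = k} := fun k => hg (MeasurableSet.singleton k)
  have hgk0 : ∀ k, MeasurableSet {ω | g ω = k} := fun k => hm _ (hgk k)
  set f : ℕ → Ω → ℝ := fun k =>
    ({ω | g ω = k}.indicator (fun _ => (1:ℝ))) * ((D k).indicator (fun _ => (1:ℝ))) with hf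
  have hfeq : ∀ k, f k = ({ω | g ω = k} ∩ D k).indicator (fun _ => (1:ℝ)) := by
    intro k; funext ω
    by_cases h1 : g ω = k <;> by_cases h2 : ω ∈ D k <;>
      simp [hf, Set.indicator_apply, h1, h2]
  have hint : ∀ k, Integrable (f k) μ := by
    intro k; rw [hfeq k]
    exact (integrable_const (1:ℝ)).indicator ((hgk0 k).inter (hD k))
  have hsum : Set.indicator E (fun _ => (1:ℝ)) =
      ∑ k ∈ Finset.range (M+1), f k := by
    funext ω
    rw [Finset.sum_apply]
    rw [Finset.sum_eq_single (g ω)]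
    · by_cases h : ω ∈ D (g ω) <;> simp [hf, Set.indicator_apply, hE, h]
    · intro k _ hk
      simp [hf, Set.indicator_apply, Ne.symm hk]
    · intro h
      exact absurd (Finset.mem_range.2 (Nat.lt_succ_of_le (hae ω).1)) h
  have h2 : μ[∑ k ∈ Finset.range (M+1), f k|m'] =ᵐ[μ]
      ∑ k ∈ Finset.range (M+1), μ[f k|m'] :=
    condExp_finsetSum (fun k _ => hint k) m'
  have h3 : ∀ k, μ[f k|m'] =ᵐ[μ]
      ({ω | g ω = k}.indicator (fun _ => (1:ℝ))) * μ[(D k).indicator (fun _ => (1:ℝ))|m'] := by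
    intro k
    exact condExp_mul_of_stronglyMeasurable_left
      (stronglyMeasurable_const.indicator (hgk k))
      (hint k)
      ((integrable_const (1:ℝ)).indicator (hD k))
  have h3' : ∀ᵐ ω ∂μ, ∀ k, k ∈ Finset.range (M+1) → (μ[f k|m']) ω =
      ({ω | g ω = k}.indicator (fun _ => (1:ℝ)) ω) * (μ[(D k).indicator (fun _ => (1:ℝ))|m']) ω := by
    rw [ae_all_iff]
    intro k
    exact (h3 k).mono fun ω h _ => h
  filter_upwards [h2, h3'] with ω e2 e3
  rw [hsum, e2, Finset.sum_apply]
  have : ∑ k ∈ Finset.range (M+1), (μ[f k|m']) ω = cpf (g ω) ω := by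
    rw [Finset.sum_eq_single (g ω)]
    · rw [e3 (g ω) (Finset.mem_range.2 (Nat.lt_succ_of_le (hae ω).1))]
      simp [Set.indicator_apply, hcpf]
    · intro k hk hne
      rw [e3 k hk]
      simp [Set.indicator_apply, Ne.symm hne]
    · intro h
      exact absurd (Finset.mem_range.2 (Nat.lt_succ_of_le (hae ω).1)) h
  rw [this]
  exact (hae ω).2

lemma cond_inter {Ω : Type*} {m' : MeasurableSpace Ω} [m0 : MeasurableSpace Ω]
    (hm : m' ≤ m0) (μ : Measure Ω) [IsProbabilityMeasure μ]
    (A B : Set Ω) (hA : MeasurableSet A) (hB : MeasurableSet B) (c1 c2 : ℝ)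
    (h1 : ∀ᵐ ω ∂μ, c1 ≤ (μ[A.indicator (fun _ => (1:ℝ))|m']) ω)
    (h2 : ∀ᵐ ω ∂μ, c2 ≤ (μ[B.indicator (fun _ => (1:ℝ))|m']) ω) :
    ∀ᵐ ω ∂μ, c1 + c2 - 1 ≤ (μ[(A ∩ B).indicator (fun _ => (1:ℝ))|m']) ω := by
  have hiA : Integrable (A.indicator (fun _ => (1:ℝ))) μ := (integrable_const _).indicator hA
  have hiB : Integrable (B.indicator (fun _ => (1:ℝ))) μ := (integrable_const _).indicator hB
  have hiAB : Integrable ((A ∩ B).indicator (fun _ => (1:ℝ))) μ :=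
    (integrable_const _).indicator (hA.inter hB)
  have hpt : (A.indicator (fun _ => (1:ℝ))) + (B.indicator (fun _ => (1:ℝ)))
      ≤ᵐ[μ] (A ∩ B).indicator (fun _ => (1:ℝ)) + (fun _ => (1:ℝ)) := by
    refine Filter.Eventually.of_forall fun ω => ?_
    by_cases h1 : ω ∈ A <;> by_cases h2 : ω ∈ B <;>
      simp [Set.indicator_apply, h1, h2]
  have hmono := condExp_mono (m := m') (hiA.add hiB) (hiAB.add (integrable_const _)) hpt
  have e1 := condExp_add (μ := μ) (m := m') hiA hiB
  have e2 := condExp_add (μ := μ) (m := m') hiAB (integrable_const (1:ℝ))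
  have e3 : μ[(fun _ => (1:ℝ))|m'] = fun _ => (1:ℝ) := condExp_const hm 1
  filter_upwards [h1, h2, hmono, e1, e2] with ω k1 k2 km ke1 ke2
  rw [ke1] at km
  rw [ke2] at km
  have : (μ[(fun _ => (1:ℝ))|m']) ω = 1 := by rw [e3]
  simp only [Pi.add_apply, this] at km
  linarith

lemma part1 {Ω : Type*} {m' : MeasurableSpace Ω} [m0 : MeasurableSpace Ω]
    (hm : m' ≤ m0) (μ : Measure Ω) [IsProbabilityMeasure μ]
    (N : Ω → ℕ) (hN : Measurable N)
    (nU nL : Ω → ℕ) (hnU : Measurable[m'] nU) (hnL : Measurable[m'] nL)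
    (M : ℕ) (c1 c2 : ℝ)
    (cpf cpf' : ℕ → Ω → ℝ)
    (hcpf : ∀ n, cpf n = μ[Set.indicator {ω | N ω ≤ n} (fun _ => (1:ℝ))|m'])
    (hcpf' : ∀ n, cpf' n = μ[Set.indicator {ω | n ≤ N ω} (fun _ => (1:ℝ))|m'])
    (hUm : ∀ ω, nU ω ≤ M ∧ c2 ≤ cpf (nU ω) ω)
    (hLm : ∀ ω, nL ω ≤ M ∧ c1 ≤ cpf' (nL ω) ω) :
    MeasurableSet {ω | nL ω ≤ N ω ∧ N ω ≤ nU ω} ∧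
    ∀ᵐ ω ∂μ, c1 + c2 - 1 ≤
      (μ[Set.indicator {ω' | nL ω' ≤ N ω' ∧ N ω' ≤ nU ω'} (fun _ => (1:ℝ))|m']) ω := by
  have hA : MeasurableSet {ω | nL ω ≤ N ω} := by
    have hp : Measurable (fun ω => (nL ω, N ω)) := ((hnL.mono hm le_rfl).prodMk hN)
    exact hp (measurableSet_of_countable {p : ℕ × ℕ | p.1 ≤ p.2})
  have hB : MeasurableSet {ω | N ω ≤ nU ω} := by
    have hp : Measurable (fun ω => (N ω, nU ω)) := (hN.prodMk (hnU.mono hm le_rfl))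
    exact hp (measurableSet_of_countable {p : ℕ × ℕ | p.1 ≤ p.2})
  have hDB : ∀ n, MeasurableSet {ω | N ω ≤ n} :=
    fun n => hN (measurableSet_of_countable (Set.Iic n))
  have hDA : ∀ n, MeasurableSet {ω | n ≤ N ω} :=
    fun n => hN (measurableSet_of_countable (Set.Ici n))
  have hkeyB : ∀ᵐ ω ∂μ, c2 ≤
      (μ[Set.indicator {ω' | N ω' ≤ nU ω'} (fun _ => (1:ℝ))|m']) ω :=
    cond_key hm μ (fun n => {ω | N ω ≤ n}) hDB nU hnU M c2 cpf hcpf hUm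
  have hkeyA : ∀ᵐ ω ∂μ, c1 ≤
      (μ[Set.indicator {ω' | nL ω' ≤ N ω'} (fun _ => (1:ℝ))|m']) ω :=
    cond_key hm μ (fun n => {ω | n ≤ N ω}) hDA nL hnL M c1 cpf' hcpf' hLm
  refine ⟨hA.inter hB, ?_⟩
  exact cond_inter hm μ _ _ hA hB c1 c2 hkeyA hkeyB

/-- The posterior interval `[L_{αγ}(X,R), U_{α(1−γ)}(X,R)]` has conditional coverage
`≥ 1 − α` given `X` for every fixed nonempty `R`, and hence unconditional coverage
`≥ 1 − α` for any measurable selection policy `S` with `S(X)` nonempty. -/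
theorem stmt3 {Ω 𝒳 : Type*} [MeasurableSpace Ω] [MeasurableSpace 𝒳]
    (μ : Measure Ω) [IsProbabilityMeasure μ] {m : ℕ}
    (θ : Ω → Fin m → Bool) (hθ : Measurable θ)
    (X : Ω → 𝒳) (hX : Measurable X)
    (α γ : ℝ) (hα : α ∈ Set.Ioo (0:ℝ) 1) (hγ : γ ∈ Set.Ioo (0:ℝ) 1)
    -- conditional probabilities `cp R n ω = P(∑_{i∈R}(1−θ_i) ≤ n | X)(ω)` and
    -- `cp' R n ω = P(∑_{i∈R}(1−θ_i) ≥ n | X)(ω)`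
    (cp cp' : Finset (Fin m) → ℕ → Ω → ℝ)
    (hcp : ∀ R n, cp R n =
      μ[Set.indicator {ω | (R.filter (fun i => θ ω i = false)).card ≤ n}
          (fun _ => (1 : ℝ)) | MeasurableSpace.comap X inferInstance])
    (hcp' : ∀ R n, cp' R n =
      μ[Set.indicator {ω | n ≤ (R.filter (fun i => θ ω i = false)).card}
          (fun _ => (1 : ℝ)) | MeasurableSpace.comap X inferInstance])
    -- the bounds `U_{α(1−γ)}(X,R)` and `L_{αγ}(X,R)`
    (U L : Finset (Fin m) → Ω → ℝ)
    (hU : U = fun R ω =>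
      ((sInf {n : ℕ | n ≤ m ∧ 1 - α * (1 - γ) ≤ cp R n ω} : ℕ) : ℝ) / (R.card : ℝ))
    (hL : L = fun R ω =>
      ((sSup {n : ℕ | n ≤ m ∧ 1 - α * γ ≤ cp' R n ω} : ℕ) : ℝ) / (R.card : ℝ))
    -- a measurable selection policy with nonempty selections
    (S : 𝒳 → Finset (Fin m)) (hS : Measurable S) (hSne : ∀ x, (S x).Nonempty) :
    (∀ R : Finset (Fin m), R.Nonempty →
      ∀ᵐ ω ∂μ,
        1 - α ≤
          (μ[Set.indicator {ω' | FDP (θ ω') R ∈ Set.Icc (L R ω') (U R ω')}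
              (fun _ => (1 : ℝ)) | MeasurableSpace.comap X inferInstance]) ω) ∧
    1 - α ≤ (μ {ω | FDP (θ ω) (S (X ω)) ∈ Set.Icc (L (S (X ω)) ω) (U (S (X ω)) ω)}).toReal := by
  classical
  obtain ⟨hα0, hα1⟩ := hα
  obtain ⟨hγ0, hγ1⟩ := hγ
  have hm : MeasurableSpace.comap X inferInstance ≤ ‹MeasurableSpace Ω› := hX.comap_le
  -- measurability of the number of false discoveries
  have hNmeas : ∀ R : Finset (Fin m),
      Measurable (fun ω => (R.filter (fun i => θ ω i = false)).card) :=
    fun R => (measurable_from_countable'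
      (fun v : Fin m → Bool => (R.filter (fun i => v i = false)).card)).comp hθ
  -- measurability of the conditional probabilities w.r.t. σ(X)
  have hcpm : ∀ R n, Measurable[MeasurableSpace.comap X inferInstance] (cp R n) := by
    intro R n; rw [hcp]; exact stronglyMeasurable_condExp.measurable
  have hcpm' : ∀ R n, Measurable[MeasurableSpace.comap X inferInstance] (cp' R n) := by
    intro R n; rw [hcp']; exact stronglyMeasurable_condExp.measurable
  -- measurability of nU and nL w.r.t. σ(X)
  have hnUm : ∀ R : Finset (Fin m), Measurable[MeasurableSpace.comap X inferInstance]
      (fun ω => sInf {n : ℕ | n ≤ m ∧ 1 - α * (1 - γ) ≤ cp R n ω}) := by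
    intro R
    have hf : Measurable[MeasurableSpace.comap X inferInstance]
        (fun ω (k : Fin (m+1)) => decide (1 - α * (1 - γ) ≤ cp R k ω)) :=
      @measurable_pi_lambda Ω (Fin (m+1)) (fun _ => Bool)
        (MeasurableSpace.comap X inferInstance) _ _
        (fun k => (measurable_decide_le _).comp (hcpm R k))
    have heq : (fun ω => sInf {n : ℕ | n ≤ m ∧ 1 - α * (1 - γ) ≤ cp R n ω}) =
        (fun b : Fin (m+1) → Bool => sInf {n : ℕ | ∃ h : n < m+1, b ⟨n, h⟩ = true}) ∘
          (fun ω (k : Fin (m+1)) => decide (1 - α * (1 - γ) ≤ cp R k ω)) := by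
      funext ω
      simp only [Function.comp_apply]
      congr 1
      ext n
      simp only [Set.mem_setOf_eq, decide_eq_true_eq]
      constructor
      · rintro ⟨h1, h2⟩; exact ⟨Nat.lt_succ_of_le h1, h2⟩
      · rintro ⟨h1, h2⟩; exact ⟨Nat.lt_succ_iff.mp h1, h2⟩
    rw [heq]
    exact (measurable_from_countable' _).comp hf
  have hnLm : ∀ R : Finset (Fin m), Measurable[MeasurableSpace.comap X inferInstance]
      (fun ω => sSup {n : ℕ | n ≤ m ∧ 1 - α * γ ≤ cp' R n ω}) := by
    intro R
    have hf : Measurable[MeasurableSpace.comap X inferInstance]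
        (fun ω (k : Fin (m+1)) => decide (1 - α * γ ≤ cp' R k ω)) :=
      @measurable_pi_lambda Ω (Fin (m+1)) (fun _ => Bool)
        (MeasurableSpace.comap X inferInstance) _ _
        (fun k => (measurable_decide_le _).comp (hcpm' R k))
    have heq : (fun ω => sSup {n : ℕ | n ≤ m ∧ 1 - α * γ ≤ cp' R n ω}) =
        (fun b : Fin (m+1) → Bool => sSup {n : ℕ | ∃ h : n < m+1, b ⟨n, h⟩ = true}) ∘
          (fun ω (k : Fin (m+1)) => decide (1 - α * γ ≤ cp' R k ω)) := by
      funext ω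
      simp only [Function.comp_apply]
      congr 1
      ext n
      simp only [Set.mem_setOf_eq, decide_eq_true_eq]
      constructor
      · rintro ⟨h1, h2⟩; exact ⟨Nat.lt_succ_of_le h1, h2⟩
      · rintro ⟨h1, h2⟩; exact ⟨Nat.lt_succ_iff.mp h1, h2⟩
    rw [heq]
    exact (measurable_from_countable' _).comp hf
  -- boundary conditional probabilities are identically one
  have hcpUtop : ∀ R : Finset (Fin m), cp R m = fun _ => (1:ℝ) := by
    intro R
    rw [hcp]
    have huniv : {ω : Ω | (R.filter (fun i => θ ω i = false)).card ≤ m} = Set.univ := by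
      ext ω
      simp only [Set.mem_setOf_eq, Set.mem_univ, iff_true]
      calc (R.filter (fun i => θ ω i = false)).card ≤ R.card := Finset.card_filter_le _ _
        _ ≤ (Finset.univ : Finset (Fin m)).card := Finset.card_le_univ R
        _ = m := by simp
    rw [huniv, Set.indicator_univ]
    exact condExp_const hm 1
  have hcpLbot : ∀ R : Finset (Fin m), cp' R 0 = fun _ => (1:ℝ) := by
    intro R
    rw [hcp']
    have huniv : {ω : Ω | 0 ≤ (R.filter (fun i => θ ω i = false)).card} = Set.univ := by
      ext ω; simp
    rw [huniv, Set.indicator_univ]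
    exact condExp_const hm 1
  have hc2le : (1 : ℝ) - α * (1 - γ) ≤ 1 := by nlinarith
  have hc1le : (1 : ℝ) - α * γ ≤ 1 := by nlinarith
  -- the infimum/supremum belong to their defining sets
  have hUmem : ∀ (R : Finset (Fin m)) (ω : Ω),
      sInf {n : ℕ | n ≤ m ∧ 1 - α * (1 - γ) ≤ cp R n ω} ≤ m ∧
      1 - α * (1 - γ) ≤ cp R (sInf {n : ℕ | n ≤ m ∧ 1 - α * (1 - γ) ≤ cp R n ω}) ω := by
    intro R ω
    have hne : {n : ℕ | n ≤ m ∧ 1 - α * (1 - γ) ≤ cp R n ω}.Nonempty :=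
      ⟨m, le_refl m, by rw [hcpUtop R]; exact hc2le⟩
    exact Nat.sInf_mem hne
  have hLmem : ∀ (R : Finset (Fin m)) (ω : Ω),
      sSup {n : ℕ | n ≤ m ∧ 1 - α * γ ≤ cp' R n ω} ≤ m ∧
      1 - α * γ ≤ cp' R (sSup {n : ℕ | n ≤ m ∧ 1 - α * γ ≤ cp' R n ω}) ω := by
    intro R ω
    have hne : {n : ℕ | n ≤ m ∧ 1 - α * γ ≤ cp' R n ω}.Nonempty :=
      ⟨0, Nat.zero_le m, by rw [hcpLbot R]; exact hc1le⟩
    exact Nat.sSup_mem hne ⟨m, fun n hn => hn.1⟩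
  -- the key conditional coverage statement, in terms of counts
  have key : ∀ R : Finset (Fin m),
      MeasurableSet {ω : Ω | sSup {n : ℕ | n ≤ m ∧ 1 - α * γ ≤ cp' R n ω} ≤
          (R.filter (fun i => θ ω i = false)).card ∧
          (R.filter (fun i => θ ω i = false)).card ≤
          sInf {n : ℕ | n ≤ m ∧ 1 - α * (1 - γ) ≤ cp R n ω}} ∧
      ∀ᵐ ω ∂μ, 1 - α ≤
        (μ[Set.indicator {ω' : Ω | sSup {n : ℕ | n ≤ m ∧ 1 - α * γ ≤ cp' R n ω'} ≤
            (R.filter (fun i => θ ω' i = false)).card ∧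
            (R.filter (fun i => θ ω' i = false)).card ≤
            sInf {n : ℕ | n ≤ m ∧ 1 - α * (1 - γ) ≤ cp R n ω'}}
          (fun _ => (1 : ℝ)) | MeasurableSpace.comap X inferInstance]) ω := by
    intro R
    have h := part1 hm μ
      (fun ω => (R.filter (fun i => θ ω i = false)).card) (hNmeas R)
      (fun ω => sInf {n : ℕ | n ≤ m ∧ 1 - α * (1 - γ) ≤ cp R n ω})
      (fun ω => sSup {n : ℕ | n ≤ m ∧ 1 - α * γ ≤ cp' R n ω})
      (hnUm R) (hnLm R) m (1 - α * γ) (1 - α * (1 - γ))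
      (cp R) (cp' R) (hcp R) (hcp' R) (hUmem R) (hLmem R)
    refine ⟨h.1, h.2.mono fun ω hω => le_trans (le_of_eq (by ring)) hω⟩
  -- identification of the FDP event with the count event
  have hsetEq : ∀ R : Finset (Fin m), R.Nonempty →
      {ω' : Ω | FDP (θ ω') R ∈ Set.Icc (L R ω') (U R ω')} =
      {ω : Ω | sSup {n : ℕ | n ≤ m ∧ 1 - α * γ ≤ cp' R n ω} ≤
          (R.filter (fun i => θ ω i = false)).card ∧
          (R.filter (fun i => θ ω i = false)).card ≤
          sInf {n : ℕ | n ≤ m ∧ 1 - α * (1 - γ) ≤ cp R n ω}} := by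
    intro R hR
    have hcard1 : (1:ℝ) ≤ (R.card:ℝ) := by exact_mod_cast hR.card_pos
    have hcard0 : (0:ℝ) < (R.card:ℝ) := lt_of_lt_of_le zero_lt_one hcard1
    ext ω
    simp only [Set.mem_setOf_eq, Set.mem_Icc, hU, hL, FDP, max_eq_left hcard1]
    rw [div_le_div_iff_of_pos_right hcard0, div_le_div_iff_of_pos_right hcard0,
      Nat.cast_le, Nat.cast_le]
  refine ⟨fun R hR => ?_, ?_⟩
  · rw [hsetEq R hR]
    exact (key R).2
  -- Part 2: unconditional coverage for the selection policy
  · have hWmX : ∀ R : Finset (Fin m),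
        MeasurableSet[MeasurableSpace.comap X inferInstance] {ω : Ω | S (X ω) = R} :=
      fun R => ⟨S ⁻¹' {R}, hS trivial, rfl⟩
    have hW : ∀ R : Finset (Fin m), MeasurableSet {ω : Ω | S (X ω) = R} :=
      fun R => hm _ (hWmX R)
    have hWemp : {ω : Ω | S (X ω) = (∅ : Finset (Fin m))} = ∅ := by
      ext ω
      simp only [Set.mem_setOf_eq, Set.mem_empty_iff_false, iff_false]
      exact fun h => (hSne (X ω)).ne_empty h
    have hEmeas : ∀ R : Finset (Fin m), R.Nonempty →
        MeasurableSet {ω' : Ω | FDP (θ ω') R ∈ Set.Icc (L R ω') (U R ω')} := by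
      intro R hR
      rw [hsetEq R hR]
      exact (key R).1
    have hWE : ∀ R : Finset (Fin m),
        MeasurableSet ({ω : Ω | S (X ω) = R} ∩
          {ω' : Ω | FDP (θ ω') R ∈ Set.Icc (L R ω') (U R ω')}) := by
      intro R
      rcases eq_or_ne R ∅ with rfl | hne
      · rw [hWemp, Set.empty_inter]; exact MeasurableSet.empty
      · exact (hW R).inter (hEmeas R (Finset.nonempty_iff_ne_empty.2 hne))
    have hEint : ∀ R : Finset (Fin m),
        Integrable (({ω : Ω | S (X ω) = R} ∩
          {ω' : Ω | FDP (θ ω') R ∈ Set.Icc (L R ω') (U R ω')}).indicator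
          (fun _ => (1:ℝ))) μ :=
      fun R => (integrable_const _).indicator (hWE R)
    have hFdecomp : {ω : Ω | FDP (θ ω) (S (X ω)) ∈
          Set.Icc (L (S (X ω)) ω) (U (S (X ω)) ω)}.indicator (fun _ => (1:ℝ)) =
        ∑ R : Finset (Fin m), ({ω : Ω | S (X ω) = R} ∩
          {ω' : Ω | FDP (θ ω') R ∈ Set.Icc (L R ω') (U R ω')}).indicator (fun _ => (1:ℝ)) := by
      funext ω
      rw [Finset.sum_apply, Finset.sum_eq_single (S (X ω))]
      · by_cases h : FDP (θ ω) (S (X ω)) ∈ Set.Icc (L (S (X ω)) ω) (U (S (X ω)) ω) <;>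
          simp [Set.indicator_apply, h]
      · intro R _ hR
        exact Set.indicator_of_notMem (fun hmem => hR hmem.1.symm) _
      · intro h
        exact absurd (Finset.mem_univ _) h
    have hFmeas : MeasurableSet {ω : Ω | FDP (θ ω) (S (X ω)) ∈
        Set.Icc (L (S (X ω)) ω) (U (S (X ω)) ω)} := by
      have hun : {ω : Ω | FDP (θ ω) (S (X ω)) ∈
          Set.Icc (L (S (X ω)) ω) (U (S (X ω)) ω)} =
          ⋃ R : Finset (Fin m), ({ω : Ω | S (X ω) = R} ∩
            {ω' : Ω | FDP (θ ω') R ∈ Set.Icc (L R ω') (U R ω')}) := by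
        ext ω
        simp only [Set.mem_iUnion, Set.mem_inter_iff, Set.mem_setOf_eq]
        constructor
        · intro h; exact ⟨S (X ω), rfl, h⟩
        · rintro ⟨R, rfl, h⟩; exact h
      rw [hun]
      exact MeasurableSet.iUnion hWE
    -- lower bound for each piece
    have step3 : ∀ R : Finset (Fin m),
        (1 - α) * (μ {ω : Ω | S (X ω) = R}).toReal ≤
        ∫ ω, ({ω : Ω | S (X ω) = R} ∩
          {ω' : Ω | FDP (θ ω') R ∈ Set.Icc (L R ω') (U R ω')}).indicator
          (fun _ => (1:ℝ)) ω ∂μ := by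
      intro R
      rcases eq_or_ne R ∅ with rfl | hne
      · rw [hWemp]; simp
      · have hRne : R.Nonempty := Finset.nonempty_iff_ne_empty.2 hne
        have hEm := hEmeas R hRne
        have hcond : ∀ᵐ ω ∂μ, 1 - α ≤
            (μ[Set.indicator {ω' : Ω | FDP (θ ω') R ∈ Set.Icc (L R ω') (U R ω')}
              (fun _ => (1 : ℝ)) | MeasurableSpace.comap X inferInstance]) ω := by
          rw [hsetEq R hRne]
          exact (key R).2
        rw [← Set.indicator_indicator, integral_indicator (hW R),
          ← setIntegral_condExp hm ((integrable_const _).indicator hEm) (hWmX R)]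
        calc (1 - α) * (μ {ω : Ω | S (X ω) = R}).toReal
            = ∫ _ω in {ω : Ω | S (X ω) = R}, (1 - α) ∂μ := by
              rw [setIntegral_const, smul_eq_mul, measureReal_def]; ring
          _ ≤ ∫ ω in {ω : Ω | S (X ω) = R},
                (μ[Set.indicator {ω' : Ω | FDP (θ ω') R ∈ Set.Icc (L R ω') (U R ω')}
                  (fun _ => (1 : ℝ)) | MeasurableSpace.comap X inferInstance]) ω ∂μ :=
              integral_mono_ae ((integrable_const _).restrict)
                (integrable_condExp.restrict) (ae_restrict_of_ae hcond)
    -- total mass of the selection cells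
    have step4 : ∑ R : Finset (Fin m), (μ {ω : Ω | S (X ω) = R}).toReal = 1 := by
      have hdisj : Pairwise (Function.onFun Disjoint fun R : Finset (Fin m) => {ω : Ω | S (X ω) = R}) := by
        intro R R' hne
        simp only [Function.onFun, Set.disjoint_left, Set.mem_setOf_eq]
        rintro ω rfl h2
        exact hne h2
      have hcover : ⋃ R : Finset (Fin m), {ω : Ω | S (X ω) = R} = Set.univ := by
        ext ω
        simp only [Set.mem_iUnion, Set.mem_setOf_eq, Set.mem_univ, iff_true]
        exact ⟨_, rfl⟩
      have hμu := measure_iUnion (μ := μ) hdisj hW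
      rw [hcover, tsum_fintype] at hμu
      calc ∑ R : Finset (Fin m), (μ {ω : Ω | S (X ω) = R}).toReal
          = (∑ R : Finset (Fin m), μ {ω : Ω | S (X ω) = R}).toReal :=
            (ENNReal.toReal_sum fun _ _ => measure_ne_top μ _).symm
        _ = (μ Set.univ).toReal := by rw [← hμu]
        _ = 1 := by simp
    have htot : ∑ R : Finset (Fin m), (1 - α) * (μ {ω : Ω | S (X ω) = R}).toReal = 1 - α := by
      rw [← Finset.mul_sum, step4, mul_one]
    have hint_eq : ∫ ω, Set.indicator {ω : Ω | FDP (θ ω) (S (X ω)) ∈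
          Set.Icc (L (S (X ω)) ω) (U (S (X ω)) ω)} (fun _ => (1:ℝ)) ω ∂μ =
        ∑ R : Finset (Fin m), ∫ ω, ({ω : Ω | S (X ω) = R} ∩
          {ω' : Ω | FDP (θ ω') R ∈ Set.Icc (L R ω') (U R ω')}).indicator
          (fun _ => (1:ℝ)) ω ∂μ := by
      rw [hFdecomp]
      simp only [Finset.sum_apply]
      exact integral_finset_sum _ (fun R _ => hEint R)
    have hmu : (μ {ω : Ω | FDP (θ ω) (S (X ω)) ∈
        Set.Icc (L (S (X ω)) ω) (U (S (X ω)) ω)}).toReal =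
        ∫ ω, Set.indicator {ω : Ω | FDP (θ ω) (S (X ω)) ∈
          Set.Icc (L (S (X ω)) ω) (U (S (X ω)) ω)} (fun _ => (1:ℝ)) ω ∂μ := by
      rw [integral_indicator_const (1:ℝ) hFmeas, smul_eq_mul, mul_one, measureReal_def]
    calc 1 - α = ∑ R : Finset (Fin m), (1 - α) * (μ {ω : Ω | S (X ω) = R}).toReal := htot.symm
      _ ≤ ∑ R : Finset (Fin m), ∫ ω, ({ω : Ω | S (X ω) = R} ∩
            {ω' : Ω | FDP (θ ω') R ∈ Set.Icc (L R ω') (U R ω')}).indicator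
            (fun _ => (1:ℝ)) ω ∂μ := Finset.sum_le_sum (fun R _ => step3 R)
      _ = ∫ ω, Set.indicator {ω : Ω | FDP (θ ω) (S (X ω)) ∈
            Set.Icc (L (S (X ω)) ω) (U (S (X ω)) ω)} (fun _ => (1:ℝ)) ω ∂μ := hint_eq.symm
      _ = _ := hmu.symm
end

section
/- Let μ and ν be probability measures on {0,1}^m, R ⊂ {1,…,m} nonempty of size s, β ∈ (0,1), and U_β(ν) = s^{-1} min{n ∈ {0,…,m} : ν(Σ_{i∈R}(1−θ_i) ≤ n) ≥ 1−β}. Then μ(FDP(θ,R) ≤ U_β(ν)) ≥ 1 − β − d_TV(μ, ν). -/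
open MeasureTheory ProbabilityTheory

/-- Total variation distance between two measures:
`d_TV(μ,ν) = sup_A |μ(A) − ν(A)|` over measurable sets `A`. -/
noncomputable def dTV {α : Type*} [MeasurableSpace α] (μ ν : Measure α) : ℝ :=
  ⨆ A : {A : Set α // MeasurableSet A}, |(μ A).toReal - (ν A).toReal|

/-- Key step of plug-in consistency: the bound computed under `ν` covers the FDP
under `μ` up to a total variation correction:
`μ(FDP(θ,R) ≤ U_β(ν)) ≥ 1 − β − d_TV(μ,ν)`. -/
theorem stmt12 {m : ℕ} (μ ν : Measure (Fin m → Bool))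
    [IsProbabilityMeasure μ] [IsProbabilityMeasure ν]
    (R : Finset (Fin m)) (hR : R.Nonempty)
    (β : ℝ) (hβ : β ∈ Set.Ioo (0:ℝ) 1)
    (U : ℝ)
    (hU : U = ((sInf {n : ℕ | n ≤ m ∧
        1 - β ≤ (ν {θ | (R.filter (fun i => θ i = false)).card ≤ n}).toReal} : ℕ) : ℝ)
      / (R.card : ℝ)) :
    1 - β - dTV μ ν ≤ (μ {θ | FDP θ R ≤ U}).toReal := by
  obtain ⟨hβ0, hβ1⟩ := hβ
  set S : Set ℕ := {n : ℕ | n ≤ m ∧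
      1 - β ≤ (ν {θ | (R.filter (fun i => θ i = false)).card ≤ n}).toReal} with hS
  have hmS : m ∈ S := by
    constructor
    · exact le_rfl
    · have : {θ : Fin m → Bool | (R.filter (fun i => θ i = false)).card ≤ m} = Set.univ := by
        ext θ
        simp only [Set.mem_setOf_eq, Set.mem_univ, iff_true]
        calc (R.filter (fun i => θ i = false)).card ≤ R.card := Finset.card_filter_le _ _
          _ ≤ Fintype.card (Fin m) := Finset.card_le_univ R
          _ = m := Fintype.card_fin m
      rw [this]
      simp [measure_univ]
      linarith
  set n₀ : ℕ := sInf S with hn₀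
  have hmem : n₀ ∈ S := Nat.sInf_mem ⟨m, hmS⟩
  set A : Set (Fin m → Bool) := {θ | (R.filter (fun i => θ i = false)).card ≤ n₀} with hA
  have hAmeas : MeasurableSet A := (Set.to_countable A).measurableSet
  have hνA : 1 - β ≤ (ν A).toReal := hmem.2
  -- bound via dTV
  have hbdd : BddAbove (Set.range fun B : {B : Set (Fin m → Bool) // MeasurableSet B} =>
      |(μ B).toReal - (ν B).toReal|) := by
    refine ⟨1, ?_⟩
    rintro x ⟨B, rfl⟩
    have h1 : (μ (B : Set (Fin m → Bool))).toReal ≤ 1 := by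
      have := prob_le_one (μ := μ) (s := B)
      simpa using ENNReal.toReal_mono (by norm_num) this
    have h2 : (ν (B : Set (Fin m → Bool))).toReal ≤ 1 := by
      have := prob_le_one (μ := ν) (s := B)
      simpa using ENNReal.toReal_mono (by norm_num) this
    have h3 : 0 ≤ (μ (B : Set (Fin m → Bool))).toReal := ENNReal.toReal_nonneg
    have h4 : 0 ≤ (ν (B : Set (Fin m → Bool))).toReal := ENNReal.toReal_nonneg
    rw [abs_sub_le_iff]
    constructor <;> linarith
  have hdTV : (ν A).toReal - (μ A).toReal ≤ dTV μ ν := by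
    have := le_ciSup hbdd (⟨A, hAmeas⟩ : {B : Set (Fin m → Bool) // MeasurableSet B})
    have habs : (ν A).toReal - (μ A).toReal ≤ |(μ A).toReal - (ν A).toReal| := by
      rw [abs_sub_comm]
      exact le_abs_self _
    exact habs.trans this
  -- A ⊆ target set
  have hcard : (1 : ℝ) ≤ (R.card : ℝ) := by
    exact_mod_cast Nat.one_le_iff_ne_zero.mpr (Finset.card_ne_zero_of_mem hR.choose_spec)
  have hsub : A ⊆ {θ | FDP θ R ≤ U} := by
    intro θ hθ
    simp only [Set.mem_setOf_eq] at hθ ⊢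
    rw [FDP, hU, max_eq_left hcard]
    apply div_le_div_of_nonneg_right ?_ (by linarith) |>.trans_eq rfl
    exact_mod_cast hθ
  have hmono : (μ A).toReal ≤ (μ {θ | FDP θ R ≤ U}).toReal :=
    ENNReal.toReal_mono (measure_ne_top _ _) (measure_mono hsub)
  linarith
end
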